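/- For the doubling map system, almost surely only finitely many n satisfy |∑_{k=0}^{n-1} φ(τ_B^k x) - 2n| > n^{3/4}; i.e., the Birkhoff sums of the exit time φ along the jump transformation τ_B satisfy φ_n(x) = 2n + O(n^{3/4}) almost surely. -/

import Mathlib

open MeasureTheory Set

/-- The doubling map `τ(x) = 2x mod 1`. -/
noncomputable def tau (x : ℝ) : ℝ := Int.fract (2 * x)

/-- The first exit time to `B = [1/2,1)`, plus one. -/
noncomputable def phi (x : ℝ) : ℕ := sInf {n : ℕ | tau^[n] x ∈ Set.Ico (1 / 2 : ℝ) 1} + 1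

/-- The jump transformation `τ_B(x) = τ^{φ(x)}(x)`. -/
noncomputable def tauB (x : ℝ) : ℝ := tau^[phi x] x

open Filter
open scoped Classical
def dig (x : ℝ) (i : ℕ) : Prop := Int.fract (2 ^ i * x) ∈ Set.Ico (1 / 2 : ℝ) 1

lemma fract_two_pow_fract (i : ℕ) (y : ℝ) :
    Int.fract (2 ^ i * Int.fract y) = Int.fract (2 ^ i * y) := by
  have h : (2:ℝ) ^ i * Int.fract y = 2 ^ i * y - ((2 ^ i * ⌊y⌋ : ℤ) : ℝ) := by
    rw [Int.fract]; push_cast; ring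
  rw [h, Int.fract_sub_intCast]

lemma tau_iterate {x : ℝ} (hx : x ∈ Set.Ico (0:ℝ) 1) (n : ℕ) :
    tau^[n] x = Int.fract (2 ^ n * x) := by
  induction n with
  | zero =>
    simp only [Function.iterate_zero_apply, pow_zero, one_mul]
    exact (Int.fract_eq_self.mpr ⟨hx.1, hx.2⟩).symm
  | succ n ih =>
    rw [Function.iterate_succ_apply', ih, tau,
      show (2:ℝ) * Int.fract (2 ^ n * x) = 2 ^ 1 * Int.fract (2 ^ n * x) by ring,
      fract_two_pow_fract]
    ring_nf

lemma tau_iterate_mem {x : ℝ} (hx : x ∈ Set.Ico (0:ℝ) 1) (n : ℕ) :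
    tau^[n] x ∈ Set.Ico (0:ℝ) 1 := by
  rw [tau_iterate hx]
  exact ⟨Int.fract_nonneg _, Int.fract_lt_one _⟩

lemma dig_tau_iterate {x : ℝ} (hx : x ∈ Set.Ico (0:ℝ) 1) (m i : ℕ) :
    dig (tau^[m] x) i ↔ dig x (i + m) := by
  rw [tau_iterate hx]
  unfold dig
  rw [fract_two_pow_fract, ← mul_assoc, ← pow_add]

lemma phi_eq {x : ℝ} (hx : x ∈ Set.Ico (0:ℝ) 1) :
    phi x = sInf {i : ℕ | dig x i} + 1 := by
  unfold phi
  congr 1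
  apply congrArg
  ext n
  rw [Set.mem_setOf_eq, Set.mem_setOf_eq, tau_iterate hx]
  rfl

variable {p : ℕ → Prop}

lemma nth_ge_of_count {s k : ℕ} (hp : (setOf p).Infinite) (hc : Nat.count p s = k) :
    s ≤ Nat.nth p k := by
  by_contra h
  push_neg at h
  have h1 : Nat.nth p k + 1 ≤ s := h
  have h2 : Nat.count p (Nat.nth p k + 1) ≤ Nat.count p s := Nat.count_monotone p h1
  rw [Nat.count_succ, if_pos (Nat.nth_mem_of_infinite hp k),
    Nat.count_nth (fun hf => absurd hf hp)] at h2
  omega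

lemma sInf_shift (hp : (setOf p).Infinite) {s k : ℕ} (hc : Nat.count p s = k) :
    sInf {i : ℕ | p (i + s)} = Nat.nth p k - s := by
  have hs : s ≤ Nat.nth p k := nth_ge_of_count hp hc
  apply le_antisymm
  · apply Nat.sInf_le
    show p (Nat.nth p k - s + s)
    rw [Nat.sub_add_cancel hs]
    exact Nat.nth_mem_of_infinite hp k
  · apply le_csInf
    · refine ⟨Nat.nth p k - s, ?_⟩
      show p (Nat.nth p k - s + s)
      rw [Nat.sub_add_cancel hs]
      exact Nat.nth_mem_of_infinite hp k
    · intro j hj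
      by_contra hlt
      push_neg at hlt
      have hjs : j + s < Nat.nth p k := by omega
      have h2 : Nat.count p (j + s + 1) ≤ Nat.count p (Nat.nth p k) := Nat.count_monotone p hjs
      rw [Nat.count_nth (fun hf => absurd hf hp)] at h2
      have h3 : Nat.count p s ≤ Nat.count p (j + s) := Nat.count_monotone p (by omega)
      rw [Nat.count_succ, if_pos (show p (j + s) from hj)] at h2
      omega

noncomputable def Sfun (x : ℝ) : ℕ → ℕ
  | 0 => 0
  | n + 1 => Nat.nth (dig x) n + 1

lemma count_Sfun {x : ℝ} (hinf : (setOf (dig x)).Infinite) (n : ℕ) :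
    Nat.count (dig x) (Sfun x n) = n := by
  cases n with
  | zero => simp [Sfun]
  | succ m =>
    rw [Sfun, Nat.count_succ, if_pos (Nat.nth_mem_of_infinite hinf m),
      Nat.count_nth (fun hf => absurd hf hinf)]

lemma tauB_iterate_sum {x : ℝ} (hx : x ∈ Set.Ico (0:ℝ) 1)
    (hinf : (setOf (dig x)).Infinite) (n : ℕ) :
    tauB^[n] x = tau^[Sfun x n] x ∧
      (∑ k ∈ Finset.range n, phi (tauB^[k] x)) = Sfun x n := by
  induction n with
  | zero => simp [Sfun]
  | succ n ih =>
    obtain ⟨hit, hsum⟩ := ih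
    have hy : tau^[Sfun x n] x ∈ Set.Ico (0:ℝ) 1 := tau_iterate_mem hx _
    have hcount : Nat.count (dig x) (Sfun x n) = n := count_Sfun hinf n
    have hSle : Sfun x n ≤ Nat.nth (dig x) n := nth_ge_of_count hinf hcount
    have hphi : phi (tau^[Sfun x n] x) = Nat.nth (dig x) n - Sfun x n + 1 := by
      rw [phi_eq hy]
      congr 1
      rw [show {i : ℕ | dig (tau^[Sfun x n] x) i} = {i : ℕ | dig x (i + Sfun x n)} by
        ext i; exact dig_tau_iterate hx _ i]
      exact sInf_shift hinf hcount
    constructor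
    · rw [Function.iterate_succ_apply', hit, tauB, hphi, ← Function.iterate_add_apply]
      congr 1
      show Nat.nth (dig x) n - Sfun x n + 1 + Sfun x n = Sfun x (n + 1)
      rw [Sfun]; omega
    · rw [Finset.sum_range_succ, hsum, hit, hphi, Sfun]
      omega
noncomputable def rad (i : ℕ) (x : ℝ) : ℝ := if dig x i then 1 else -1

noncomputable def Zf (m : ℕ) (x : ℝ) : ℝ := ∑ i ∈ Finset.range m, rad i x

lemma measurable_rad (i : ℕ) : Measurable (rad i) := by
  unfold rad dig
  have hm : Measurable fun x : ℝ => Int.fract (2 ^ i * x) :=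
    measurable_fract.comp (measurable_const_mul _)
  exact Measurable.ite (hm measurableSet_Ico) measurable_const measurable_const

lemma measurable_Zf (m : ℕ) : Measurable (Zf m) :=
  Finset.measurable_sum _ (fun i _ => measurable_rad i)

lemma abs_rad_le (i : ℕ) (x : ℝ) : |rad i x| ≤ 1 := by
  unfold rad; split <;> simp

lemma abs_Zf_le (m : ℕ) (x : ℝ) : |Zf m x| ≤ m := by
  calc |Zf m x| ≤ ∑ i ∈ Finset.range m, |rad i x| := Finset.abs_sum_le_sum_abs _ _
  _ ≤ ∑ i ∈ Finset.range m, 1 := Finset.sum_le_sum (fun i _ => abs_rad_le i x)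
  _ = m := by simp

lemma intervalIntegrable_of_bounded {f : ℝ → ℝ} (hf : Measurable f) (C : ℝ)
    (hC : ∀ x, |f x| ≤ C) : IntervalIntegrable f volume 0 1 := by
  rw [intervalIntegrable_iff]
  apply Measure.integrableOn_of_bounded (by rw [uIoc_of_le (by norm_num : (0:ℝ) ≤ 1), Real.volume_Ioc]; exact ENNReal.ofReal_ne_top) hf.aestronglyMeasurable
  · exact ae_of_all _ (fun a => by simpa using hC a)

lemma intZc (m k : ℕ) (c : ℝ) :
    IntervalIntegrable (fun x => (Zf m x + c)^k) volume 0 1 := by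
  apply intervalIntegrable_of_bounded (((measurable_Zf m).add_const c).pow_const k)
    ((m + |c|)^k)
  intro x
  rw [abs_pow]
  apply pow_le_pow_left₀ (abs_nonneg _)
  calc |Zf m x + c| ≤ |Zf m x| + |c| := abs_add_le _ _
  _ ≤ m + |c| := by linarith [abs_Zf_le m x]

-- substitution identities
lemma rad_succ_half (i : ℕ) (y : ℝ) : rad (i+1) (y/2) = rad i y := by
  unfold rad dig
  norm_num [show (2:ℝ)^(i+1) * (y/2) = 2^i * y by ring]

lemma rad_succ_half' (i : ℕ) (y : ℝ) : rad (i+1) ((y+1)/2) = rad i y := by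
  unfold rad dig
  have : (2:ℝ)^(i+1) * ((y+1)/2) = 2^i * y + ((2^i : ℤ) : ℝ) := by push_cast; ring
  rw [this, Int.fract_add_intCast]

lemma rad_zero_half {y : ℝ} (hy : y ∈ Set.Ico (0:ℝ) 1) : rad 0 (y/2) = -1 := by
  unfold rad dig
  rw [if_neg]
  rw [pow_zero, one_mul, Int.fract_eq_self.mpr ⟨by linarith [hy.1], by linarith [hy.2]⟩]
  rintro ⟨h1, h2⟩
  linarith [hy.2]

lemma rad_zero_half' {y : ℝ} (hy : y ∈ Set.Ico (0:ℝ) 1) : rad 0 ((y+1)/2) = 1 := by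
  unfold rad dig
  rw [if_pos]
  rw [pow_zero, one_mul, Int.fract_eq_self.mpr ⟨by linarith [hy.1], by linarith [hy.2]⟩]
  constructor <;> [linarith [hy.1]; linarith [hy.2]]

lemma Zf_succ_half {y : ℝ} (hy : y ∈ Set.Ico (0:ℝ) 1) (m : ℕ) :
    Zf (m+1) (y/2) = Zf m y - 1 := by
  unfold Zf
  rw [Finset.sum_range_succ']
  simp only [rad_succ_half, rad_zero_half hy]
  ring

lemma Zf_succ_half' {y : ℝ} (hy : y ∈ Set.Ico (0:ℝ) 1) (m : ℕ) :
    Zf (m+1) ((y+1)/2) = Zf m y + 1 := by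
  unfold Zf
  rw [Finset.sum_range_succ']
  simp only [rad_succ_half', rad_zero_half' hy]

lemma ae_interval_congr {f g : ℝ → ℝ} (h : ∀ y ∈ Set.Ico (0:ℝ) 1, f y = g y) :
    ∫ y in (0:ℝ)..1, f y = ∫ y in (0:ℝ)..1, g y := by
  apply intervalIntegral.integral_congr_ae
  have h1 : ∀ᵐ x : ℝ, x ≠ 1 := compl_mem_ae_iff.mpr Real.volume_singleton
  filter_upwards [h1] with x hx hmem
  rw [uIoc_of_le (by norm_num : (0:ℝ) ≤ 1)] at hmem
  exact h x ⟨le_of_lt hmem.1, lt_of_le_of_ne hmem.2 hx⟩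

lemma uIcc_sub1 : Set.uIcc (0:ℝ) (1/2) ⊆ Set.uIcc (0:ℝ) 1 := by
  rw [Set.uIcc_of_le (by norm_num : (0:ℝ) ≤ 1/2), Set.uIcc_of_le (by norm_num : (0:ℝ) ≤ 1)]
  exact Set.Icc_subset_Icc le_rfl (by norm_num)

lemma uIcc_sub2 : Set.uIcc (1/2:ℝ) 1 ⊆ Set.uIcc (0:ℝ) 1 := by
  rw [Set.uIcc_of_le (by norm_num : (1/2:ℝ) ≤ 1), Set.uIcc_of_le (by norm_num : (0:ℝ) ≤ 1)]
  exact Set.Icc_subset_Icc (by norm_num) le_rfl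

lemma half_split (m k : ℕ) :
    (∫ x in (0:ℝ)..1, (Zf (m+1) x)^k) =
      (1/2) * ((∫ y in (0:ℝ)..1, (Zf m y - 1)^k) + (∫ y in (0:ℝ)..1, (Zf m y + 1)^k)) := by
  have hint : IntervalIntegrable (fun x => (Zf (m+1) x)^k) volume 0 1 := by
    simpa using intZc (m+1) k 0
  have hsub1 := hint.mono_set uIcc_sub1
  have hsub2 := hint.mono_set uIcc_sub2
  have hsplit := intervalIntegral.integral_add_adjacent_intervals hsub1 hsub2
  have hA : ∫ x in (0:ℝ)..(1/2), (Zf (m+1) x)^k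
      = (1/2) * ∫ y in (0:ℝ)..1, (Zf m y - 1)^k := by
    have h2 := intervalIntegral.integral_comp_div (a := 0) (b := 1)
      (fun x => (Zf (m+1) x)^k) (c := 2) two_ne_zero
    simp only [smul_eq_mul] at h2
    norm_num at h2
    have h3 : ∫ y in (0:ℝ)..1, (Zf (m+1) (y/2))^k = ∫ y in (0:ℝ)..1, (Zf m y - 1)^k :=
      ae_interval_congr (fun y hy => by rw [Zf_succ_half hy])
    rw [h3] at h2
    linarith
  have hB : ∫ x in (1/2:ℝ)..1, (Zf (m+1) x)^k
      = (1/2) * ∫ y in (0:ℝ)..1, (Zf m y + 1)^k := by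
    have h2 := intervalIntegral.integral_comp_mul_add (a := 0) (b := 1)
      (fun x => (Zf (m+1) x)^k) (c := 1/2) (by norm_num) (1/2)
    simp only [smul_eq_mul] at h2
    norm_num at h2
    have h3 : ∫ y in (0:ℝ)..1, (Zf (m+1) (1/2 * y + 1/2))^k
        = ∫ y in (0:ℝ)..1, (Zf m y + 1)^k :=
      ae_interval_congr (fun y hy => by
        rw [show (1/2:ℝ) * y + 1/2 = (y+1)/2 by ring, Zf_succ_half' hy])
    rw [h3] at h2
    linarith
  rw [← hsplit, hA, hB]
  ring

noncomputable def Mo (m k : ℕ) : ℝ := ∫ x in (0:ℝ)..1, (Zf m x)^k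

lemma intZpow (m k : ℕ) : IntervalIntegrable (fun x => (Zf m x)^k) volume 0 1 := by
  simpa using intZc m k 0

lemma integral_comb (m : ℕ) (a b c d e : ℝ) :
    ∫ x in (0:ℝ)..1, (a*(Zf m x)^8 + (b*(Zf m x)^6 + (c*(Zf m x)^4 + (d*(Zf m x)^2 + e))))
      = a * Mo m 8 + (b * Mo m 6 + (c * Mo m 4 + (d * Mo m 2 + e))) := by
  rw [intervalIntegral.integral_add ((intZpow m 8).const_mul a)
      (((intZpow m 6).const_mul b).add (((intZpow m 4).const_mul c).add
        (((intZpow m 2).const_mul d).add (intervalIntegrable_const)))),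
    intervalIntegral.integral_add ((intZpow m 6).const_mul b)
      (((intZpow m 4).const_mul c).add (((intZpow m 2).const_mul d).add
        (intervalIntegrable_const))),
    intervalIntegral.integral_add ((intZpow m 4).const_mul c)
      (((intZpow m 2).const_mul d).add (intervalIntegrable_const)),
    intervalIntegral.integral_add ((intZpow m 2).const_mul d) intervalIntegrable_const,
    intervalIntegral.integral_const_mul, intervalIntegral.integral_const_mul,
    intervalIntegral.integral_const_mul, intervalIntegral.integral_const_mul,
    intervalIntegral.integral_const]
  simp [Mo]

lemma Mo_rec (m k : ℕ) (a b c d e : ℝ)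
    (hexp : ∀ z : ℝ, (z-1)^k + (z+1)^k = a*z^8 + (b*z^6 + (c*z^4 + (d*z^2 + e)))) :
    Mo (m+1) k = 1/2 * (a * Mo m 8 + (b * Mo m 6 + (c * Mo m 4 + (d * Mo m 2 + e)))) := by
  have hm : IntervalIntegrable (fun x => (Zf m x - 1)^k) volume 0 1 := by
    simpa [sub_eq_add_neg] using intZc m k (-1)
  have hp : IntervalIntegrable (fun x => (Zf m x + 1)^k) volume 0 1 := intZc m k 1
  rw [Mo, half_split, ← intervalIntegral.integral_add hm hp]
  congr 1
  rw [intervalIntegral.integral_congr (g := fun x =>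
      a*(Zf m x)^8 + (b*(Zf m x)^6 + (c*(Zf m x)^4 + (d*(Zf m x)^2 + e))))
    (fun x _ => hexp (Zf m x))]
  exact integral_comb m a b c d e

lemma Mo_zero {k : ℕ} (hk : k ≠ 0) : Mo 0 k = 0 := by
  unfold Mo Zf
  simp [zero_pow hk]

lemma Mo2_rec (m : ℕ) : Mo (m+1) 2 = Mo m 2 + 1 := by
  rw [Mo_rec m 2 0 0 0 2 2 (fun z => by ring)]; ring

lemma Mo4_rec (m : ℕ) : Mo (m+1) 4 = Mo m 4 + 6 * Mo m 2 + 1 := by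
  rw [Mo_rec m 4 0 0 2 12 2 (fun z => by ring)]; ring

lemma Mo6_rec (m : ℕ) : Mo (m+1) 6 = Mo m 6 + 15 * Mo m 4 + 15 * Mo m 2 + 1 := by
  rw [Mo_rec m 6 0 2 30 30 2 (fun z => by ring)]; ring

lemma Mo8_rec (m : ℕ) :
    Mo (m+1) 8 = Mo m 8 + 28 * Mo m 6 + 70 * Mo m 4 + 28 * Mo m 2 + 1 := by
  rw [Mo_rec m 8 2 56 140 56 2 (fun z => by ring)]; ring

lemma Mo2_le (m : ℕ) : Mo m 2 ≤ m := by
  induction m with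
  | zero => simp [Mo_zero]
  | succ m ih => rw [Mo2_rec]; push_cast; linarith

lemma Mo4_le (m : ℕ) : Mo m 4 ≤ 3 * (m:ℝ)^2 := by
  induction m with
  | zero => simp [Mo_zero]
  | succ m ih =>
    rw [Mo4_rec]; push_cast
    have := Mo2_le m
    nlinarith [Nat.cast_nonneg (α := ℝ) m]

lemma Mo6_le (m : ℕ) : Mo m 6 ≤ 15 * (m:ℝ)^3 := by
  induction m with
  | zero => simp [Mo_zero]
  | succ m ih =>
    rw [Mo6_rec]; push_cast
    have h2 := Mo2_le m
    have h4 := Mo4_le m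
    nlinarith [Nat.cast_nonneg (α := ℝ) m]

lemma Mo8_le (m : ℕ) : Mo m 8 ≤ 105 * (m:ℝ)^4 := by
  induction m with
  | zero => simp [Mo_zero]
  | succ m ih =>
    rw [Mo8_rec]; push_cast
    have h2 := Mo2_le m
    have h4 := Mo4_le m
    have h6 := Mo6_le m
    nlinarith [Nat.cast_nonneg (α := ℝ) m]

noncomputable def badSet (m : ℕ) : Set ℝ :=
  {x | x ∈ Set.Ico (0:ℝ) 1 ∧ (m:ℝ)^6 < 65536 * (Zf m x)^8}

lemma badSet_meas_le (m : ℕ) :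
    volume (badSet m) ≤ ENNReal.ofReal (6881280 * (1/(m:ℝ)^2)) := by
  rcases Nat.eq_zero_or_pos m with hm | hm
  · subst hm
    have : badSet 0 = ∅ := by
      ext x; simp [badSet, Zf]
    simp [this]
  have hm1 : (1:ℝ) ≤ m := by exact_mod_cast hm
  have hmpos : (0:ℝ) < m := by linarith
  set μ := volume.restrict (Set.Ioc (0:ℝ) 1) with hμ
  set f : ℝ → ℝ := fun x => 65536 * (Zf m x)^8 with hf
  have hfmeas : Measurable f := (measurable_const.mul ((measurable_Zf m).pow_const 8))
  have hInt : Integrable f μ := by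
    have h1 : IntegrableOn (fun x => (Zf m x)^8) (Set.Ioc 0 1) volume := by
      have := (intervalIntegrable_iff (μ := volume)).mp (intZpow m 8)
      rwa [uIoc_of_le (by norm_num : (0:ℝ) ≤ 1)] at this
    exact (h1.const_mul 65536)
  have hnn : 0 ≤ᶠ[ae μ] f := ae_of_all _ (fun x => by positivity)
  have key := mul_meas_ge_le_integral_of_nonneg hnn hInt ((m:ℝ)^6)
  have hval : ∫ x, f x ∂μ = 65536 * Mo m 8 := by
    rw [hμ, hf]
    simp only []
    rw [MeasureTheory.integral_const_mul]
    congr 1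
    rw [Mo, intervalIntegral.integral_of_le (by norm_num : (0:ℝ) ≤ 1)]
  rw [hval] at key
  have hMo := Mo8_le m
  -- measure of the superlevel set
  set S := {x | (m:ℝ)^6 ≤ f x} with hS
  have hSfin : μ S ≠ ⊤ := by
    have : μ S ≤ μ Set.univ := measure_mono (Set.subset_univ _)
    have h2 : μ Set.univ ≤ volume (Set.Ioc (0:ℝ) 1) := by
      rw [hμ, Measure.restrict_apply_univ]
    rw [Real.volume_Ioc] at h2
    exact ne_top_of_le_ne_top (by simp) (this.trans h2)
  have hμS : (μ S).toReal ≤ 6881280 * (1/(m:ℝ)^2) := by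
    have hpos : (0:ℝ) < (m:ℝ)^6 := by positivity
    have h1 : (μ S).toReal ≤ (65536 * Mo m 8) / (m:ℝ)^6 := by
      rw [le_div_iff₀ hpos]
      have k2 : (m:ℝ)^6 * (μ S).toReal ≤ 65536 * Mo m 8 := key
      linarith [k2, mul_comm ((μ S).toReal) ((m:ℝ)^6)]
    apply h1.trans
    rw [div_le_iff₀ hpos]
    have : (6881280:ℝ) * (1/(m:ℝ)^2) * (m:ℝ)^6 = 6881280 * (m:ℝ)^4 := by
      field_simp
    rw [this]
    linarith
  -- badSet ⊆ S ∩ Ioc ∪ {0}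
  have hsub : badSet m ⊆ (S ∩ Set.Ioc 0 1) ∪ {0} := by
    rintro x ⟨⟨hx0, hx1⟩, hlt⟩
    rcases eq_or_lt_of_le hx0 with h | h
    · right; simp [← h]
    · left; exact ⟨le_of_lt hlt, h, le_of_lt hx1⟩
  calc volume (badSet m) ≤ volume ((S ∩ Set.Ioc 0 1) ∪ {0}) := measure_mono hsub
  _ ≤ volume (S ∩ Set.Ioc 0 1) + volume {0} := measure_union_le _ _
  _ = volume (S ∩ Set.Ioc 0 1) := by simp
  _ = μ S := by
      rw [hμ, Measure.restrict_apply (show MeasurableSet S from hfmeas measurableSet_Ici)]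
  _ = ENNReal.ofReal ((μ S).toReal) := (ENNReal.ofReal_toReal hSfin).symm
  _ ≤ ENNReal.ofReal (6881280 * (1/(m:ℝ)^2)) := ENNReal.ofReal_le_ofReal hμS

lemma limsup_badSet_null : volume (limsup badSet atTop) = 0 := by
  apply measure_limsup_atTop_eq_zero
  have hsummable : Summable (fun m : ℕ => 6881280 * (1/(m:ℝ)^2)) :=
    (Real.summable_one_div_nat_pow.mpr one_lt_two).mul_left 6881280
  have hbound : ∑' m, volume (badSet m) ≤
      ∑' m : ℕ, ENNReal.ofReal (6881280 * (1/(m:ℝ)^2)) :=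
    ENNReal.tsum_le_tsum (fun m => badSet_meas_le m)
  have : (∑' m : ℕ, ENNReal.ofReal (6881280 * (1/(m:ℝ)^2))) ≠ ⊤ := by
    rw [← ENNReal.ofReal_tsum_of_nonneg (fun m => by positivity) hsummable]
    exact ENNReal.ofReal_ne_top
  exact ne_top_of_le_ne_top this hbound

lemma Zf_eq_count (m : ℕ) (x : ℝ) :
    Zf m x = 2 * (Nat.count (dig x) m : ℝ) - m := by
  induction m with
  | zero => simp [Zf]
  | succ m ih =>
    rw [Zf, Finset.sum_range_succ, ← Zf, ih, Nat.count_succ, rad]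
    split <;> push_cast <;> ring

lemma dyadic_countable :
    Set.Countable {x : ℝ | x ∈ Set.Ico (0:ℝ) 1 ∧ ¬ (setOf (dig x)).Infinite} := by
  apply Set.Countable.mono _ (Set.countable_iUnion (fun m : ℕ =>
    Set.countable_iUnion (fun j : ℤ => Set.countable_singleton ((j:ℝ) / 2^m))))
  rintro x ⟨hx, hfin⟩
  rw [Set.not_infinite] at hfin
  obtain ⟨M, hM⟩ : ∃ M : ℕ, ∀ i, M ≤ i → ¬ dig x i := by
    obtain ⟨M, hM⟩ := hfin.bddAbove
    exact ⟨M + 1, fun i hi hdi => by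
      have := hM hdi; omega⟩
  set y := Int.fract (2 ^ M * x) with hy
  have hy0 : 0 ≤ y := Int.fract_nonneg _
  have hnd : ∀ i : ℕ, Int.fract (2 ^ i * y) < 1/2 := by
    intro i
    rw [hy, fract_two_pow_fract, ← mul_assoc, ← pow_add]
    have h2 := hM (i + M) (by omega)
    unfold dig at h2
    rcases lt_or_ge (Int.fract (2 ^ (i+M) * x)) (1/2) with h | h
    · exact h
    · exact absurd ⟨h, Int.fract_lt_one _⟩ h2
  have hyzero : y = 0 := by
    by_contra hne
    have hypos : 0 < y := lt_of_le_of_ne hy0 (Ne.symm hne)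
    have hex : ∃ i : ℕ, (1:ℝ)/2 ≤ 2 ^ i * y := by
      obtain ⟨i, hi⟩ := pow_unbounded_of_one_lt ((1:ℝ)/2/y) (by norm_num : (1:ℝ) < 2)
      rw [div_lt_iff₀ hypos] at hi
      exact ⟨i, by linarith⟩
    set i := Nat.find hex with hidef
    have hfound : (1:ℝ)/2 ≤ 2 ^ i * y := Nat.find_spec hex
    cases' Nat.eq_zero_or_pos i with h0 hpos
    · rw [h0] at hfound
      have hylt : y < 1 := Int.fract_lt_one _
      have : Int.fract ((2:ℝ) ^ 0 * y) = y := by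
        rw [pow_zero, one_mul, Int.fract_eq_self.mpr ⟨hy0, hylt⟩]
      have := hnd 0
      rw [‹Int.fract ((2:ℝ) ^ 0 * y) = y›] at this
      simp only [pow_zero, one_mul] at hfound
      linarith
    · obtain ⟨j, hj⟩ := Nat.exists_eq_add_of_lt hpos
      have hj' : i = j + 1 := by omega
      have hmin : ¬ ((1:ℝ)/2 ≤ 2 ^ j * y) := Nat.find_min hex (by omega)
      push_neg at hmin
      have hlt1 : (2:ℝ) ^ i * y < 1 := by
        rw [hj', pow_succ]
        calc (2:ℝ) ^ j * 2 * y = 2 * (2 ^ j * y) := by ring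
        _ < 2 * (1/2) := by linarith
        _ = 1 := by norm_num
      have heq : Int.fract ((2:ℝ) ^ i * y) = 2 ^ i * y := by
        rw [Int.fract_eq_self.mpr ⟨by positivity, hlt1⟩]
      have := hnd i
      rw [heq] at this
      linarith
  have : (2:ℝ) ^ M * x = ((⌊(2:ℝ) ^ M * x⌋ : ℤ) : ℝ) := by
    have := Int.fract_add_floor ((2:ℝ) ^ M * x)
    rw [hy] at hyzero
    rw [Int.fract] at hyzero
    linarith
  refine Set.mem_iUnion.mpr ⟨M, Set.mem_iUnion.mpr ⟨⌊(2:ℝ) ^ M * x⌋, ?_⟩⟩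
  have h2M : (0:ℝ) < 2 ^ M := by positivity
  simp only [Set.mem_singleton_iff]
  rw [eq_div_iff (ne_of_gt h2M)]
  linear_combination this

lemma rpow_34_bound {a b : ℝ} (ha : 0 ≤ a) (hb : 0 ≤ b) (h : 65536 * a^8 ≤ b^6) :
    a ≤ b ^ ((3:ℝ)/4) / 4 := by
  have h4a : (0:ℝ) ≤ 4 * a := by linarith
  have h48 : (4*a)^(8:ℕ) ≤ b^(6:ℕ) := by
    calc (4*a)^(8:ℕ) = 65536 * a^8 := by ring
    _ ≤ b^6 := h
  have key : 4*a ≤ b ^ ((3:ℝ)/4) := by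
    have h1 : ((4*a)^(8:ℕ) : ℝ) ^ ((1:ℝ)/8) ≤ ((b^(6:ℕ) : ℝ)) ^ ((1:ℝ)/8) :=
      Real.rpow_le_rpow (by positivity) h48 (by norm_num)
    have h2 : ((4*a)^(8:ℕ) : ℝ) ^ ((1:ℝ)/8) = 4*a := by
      rw [← Real.rpow_natCast (4*a) 8, ← Real.rpow_mul h4a]
      norm_num
    have h3 : ((b^(6:ℕ) : ℝ)) ^ ((1:ℝ)/8) = b ^ ((3:ℝ)/4) := by
      rw [← Real.rpow_natCast b 6, ← Real.rpow_mul hb]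
      norm_num
    rw [h2, h3] at h1
    exact h1
  linarith

lemma main_det {x : ℝ} (hx : x ∈ Set.Ico (0:ℝ) 1) (hinf : (setOf (dig x)).Infinite)
    {M : ℕ} (hM : ∀ m, M ≤ m → x ∉ badSet m) :
    ∀ n, M ≤ n → 1 ≤ n →
      ¬ ((n : ℝ) ^ ((3 : ℝ) / 4) <
        |(∑ k ∈ Finset.range n, (phi (tauB^[k] x) : ℝ)) - 2 * n|) := by
  intro n hMn h1n
  set m := Sfun x n with hmdef
  have hsum : (∑ k ∈ Finset.range n, phi (tauB^[k] x)) = m :=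
    (tauB_iterate_sum hx hinf n).2
  have hsumR : (∑ k ∈ Finset.range n, (phi (tauB^[k] x) : ℝ)) = (m:ℝ) := by
    rw [← Nat.cast_sum, hsum]
  have hcount : Nat.count (dig x) m = n := count_Sfun hinf n
  have hZ : Zf m x = 2 * n - m := by
    rw [Zf_eq_count, hcount]
  have hmn : n ≤ m := by
    have : n - 1 ≤ Nat.nth (dig x) (n-1) := Nat.le_nth (fun hf => absurd hf hinf)
    rw [hmdef, show n = (n-1)+1 by omega, Sfun]
    omega
  have hm1 : 1 ≤ m := le_trans h1n hmn
  have hnb : x ∉ badSet m := hM m (le_trans hMn hmn)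
  have hle : 65536 * (Zf m x)^8 ≤ (m:ℝ)^6 := by
    by_contra hcon
    push_neg at hcon
    exact hnb ⟨hx, hcon⟩
  have habs : |2 * (n:ℝ) - m| ≤ (m:ℝ) ^ ((3:ℝ)/4) / 4 := by
    apply rpow_34_bound (abs_nonneg _) (Nat.cast_nonneg m)
    calc 65536 * |2 * (n:ℝ) - m|^8 = 65536 * (2*(n:ℝ) - m)^8 := by
          rw [← abs_pow, abs_of_nonneg (by positivity)]
    _ = 65536 * (Zf m x)^8 := by rw [hZ]
    _ ≤ (m:ℝ)^6 := hle
  have hm1R : (1:ℝ) ≤ m := by exact_mod_cast hm1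
  have hrle : (m:ℝ) ^ ((3:ℝ)/4) ≤ m := by
    calc (m:ℝ) ^ ((3:ℝ)/4) ≤ (m:ℝ) ^ (1:ℝ) :=
      Real.rpow_le_rpow_of_exponent_le hm1R (by norm_num)
    _ = m := Real.rpow_one _
  have hm3n : (m:ℝ) ≤ 3 * n := by
    have h1 : (m:ℝ) - 2*n ≤ |2 * (n:ℝ) - m| := by
      rw [abs_sub_comm]
      exact le_abs_self _
    have : (m:ℝ) ≤ 2*n + m/4 := by
      have := habs
      linarith
    linarith [this]
  have hfinal : |2 * (n:ℝ) - m| ≤ (n:ℝ) ^ ((3:ℝ)/4) := by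
    have hn0 : (0:ℝ) ≤ n := Nat.cast_nonneg n
    have h3 : (m:ℝ) ^ ((3:ℝ)/4) ≤ (3*(n:ℝ)) ^ ((3:ℝ)/4) :=
      Real.rpow_le_rpow (Nat.cast_nonneg m) hm3n (by norm_num)
    have h4 : ((3:ℝ)*(n:ℝ)) ^ ((3:ℝ)/4) = 3 ^ ((3:ℝ)/4) * (n:ℝ) ^ ((3:ℝ)/4) :=
      Real.mul_rpow (by norm_num) hn0
    have h5 : (3:ℝ) ^ ((3:ℝ)/4) ≤ 3 := by
      calc (3:ℝ) ^ ((3:ℝ)/4) ≤ (3:ℝ) ^ (1:ℝ) :=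
        Real.rpow_le_rpow_of_exponent_le (by norm_num) (by norm_num)
      _ = 3 := Real.rpow_one _
    have h6 : (0:ℝ) ≤ (n:ℝ) ^ ((3:ℝ)/4) := Real.rpow_nonneg hn0 _
    nlinarith [habs]
  intro hcon
  rw [hsumR] at hcon
  rw [abs_sub_comm] at hcon
  linarith


/-- Lebesgue-almost surely only finitely many `n` satisfy
`|∑_{k=0}^{n-1} φ(τ_B^k x) - 2n| > n^{3/4}`; i.e. `φ_n(x) = 2n + O(n^{3/4})` a.s. -/
theorem stmt17 :
    volume {x : ℝ | x ∈ Set.Ico (0 : ℝ) 1 ∧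
      {n : ℕ | (n : ℝ) ^ ((3 : ℝ) / 4) <
        |(∑ k ∈ Finset.range n, (phi (tauB^[k] x) : ℝ)) - 2 * n|}.Infinite} = 0 := by
  have hsub : {x : ℝ | x ∈ Set.Ico (0 : ℝ) 1 ∧
      {n : ℕ | (n : ℝ) ^ ((3 : ℝ) / 4) <
        |(∑ k ∈ Finset.range n, (phi (tauB^[k] x) : ℝ)) - 2 * n|}.Infinite} ⊆
      (limsup badSet atTop) ∪
        {x : ℝ | x ∈ Set.Ico (0:ℝ) 1 ∧ ¬ (setOf (dig x)).Infinite} := by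
    rintro x ⟨hx, hinfbad⟩
    by_cases hdig : (setOf (dig x)).Infinite
    · left
      by_contra hlim
      rw [mem_limsup_iff_frequently_mem, Filter.not_frequently] at hlim
      obtain ⟨M, hM⟩ := Filter.eventually_atTop.mp hlim
      have hfin : {n : ℕ | (n : ℝ) ^ ((3 : ℝ) / 4) <
          |(∑ k ∈ Finset.range n, (phi (tauB^[k] x) : ℝ)) - 2 * n|} ⊆
          Set.Iio (max M 1) := by
        intro n hn
        by_contra hge
        simp only [Set.mem_Iio, not_lt, max_le_iff] at hge
        exact main_det hx hdig hM n hge.1 hge.2 hn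
      exact hinfbad (Set.Finite.subset (Set.finite_Iio _) hfin)
    · right
      exact ⟨hx, hdig⟩
  apply measure_mono_null hsub
  exact measure_union_null limsup_badSet_null (dyadic_countable.measure_zero _)
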